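/- Let F• be an acyclic complex of flat left R-modules with cycles C_n = ker(F_n → F_{n+1}), and let X be a right R-module. Then the complex X ⊗_R F• is acyclic if and only if Tor_1^R(X, C_n) = 0 for all n ∈ Z. -/

import Mathlib

universe u v

/-- A `ℤ`-indexed complex is *acyclic* if it is exact at every degree. -/
def IsAcyclicComplex {R : Type v} [Ring R] (M : ℤ → Type u)
    [∀ n, AddCommGroup (M n)] [∀ n, Module R (M n)]
    (d : ∀ n, M n →ₗ[R] M (n + 1)) : Prop :=
  ∀ n, LinearMap.range (d n) = LinearMap.ker (d (n + 1))

/-- `Tor₁^R(X, C) = 0`, phrased via the standard syzygy characterization: for every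
short exact sequence `0 → K → E → C → 0` with `E` flat, the map `X ⊗ K → X ⊗ E`
is injective. -/
def Tor1Zero (R : Type u) [CommRing R] (X C : Type u) [AddCommGroup X] [Module R X]
    [AddCommGroup C] [Module R C] : Prop :=
  ∀ (E : Type u) [AddCommGroup E] [Module R E] [Module.Flat R E],
    ∀ (K : Submodule R E) (p : E →ₗ[R] C),
      Function.Surjective p → LinearMap.ker p = K →
        Function.Injective (LinearMap.lTensor X K.subtype)

open LinearMap TensorProduct Function

/-- Chase lemma, abstract version: if `A → P → B → 0` is exact with `A → P` injective and
`B` flat, then `X ⊗ A → X ⊗ P` is injective, where `X` admits a surjection from a flat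
module `G`. -/
lemma flatQuot_aux {R : Type u} [CommRing R]
    (X : Type u) [AddCommGroup X] [Module R X]
    {A P B : Type u} [AddCommGroup A] [Module R A] [AddCommGroup P] [Module R P]
    [AddCommGroup B] [Module R B] [Module.Flat R B]
    (G : Type u) [AddCommGroup G] [Module R G] [Module.Flat R G]
    (π : G →ₗ[R] X) (hπ : Function.Surjective π)
    (f : A →ₗ[R] P) (g : P →ₗ[R] B)
    (hf : Function.Injective f) (hfg : Function.Exact f g) (hg : Function.Surjective g) :
    Function.Injective (lTensor X f) := by
  set ι : ↥(ker π) →ₗ[R] G := (ker π).subtype with hidef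
  have hπι : π.comp ι = 0 := by
    ext y
    exact y.2
  rw [injective_iff_map_eq_zero]
  intro t ht
  obtain ⟨u, rfl⟩ := rTensor_surjective A hπ t
  have h1 : rTensor P π (lTensor G f u) = 0 := by
    rw [← LinearMap.comp_apply, rTensor_comp_lTensor, ← lTensor_comp_rTensor,
      LinearMap.comp_apply]
    exact ht
  have hex1 : Function.Exact (rTensor P ι) (rTensor P π) :=
    rTensor_exact P (exact_subtype_ker_map π) hπ
  obtain ⟨v, hv⟩ := (hex1 _).mp h1
  have h2 : rTensor B ι (lTensor (↥(ker π)) g v) = 0 := by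
    rw [← LinearMap.comp_apply, rTensor_comp_lTensor, ← lTensor_comp_rTensor,
      LinearMap.comp_apply, hv, ← LinearMap.comp_apply, ← lTensor_comp,
      hfg.linearMap_comp_eq_zero, lTensor_zero, LinearMap.zero_apply]
  have hv0 : lTensor (↥(ker π)) g v = 0 :=
    Module.Flat.rTensor_preserves_injective_linearMap ι (Submodule.injective_subtype _)
      (by rw [map_zero]; exact h2)
  have hex2 : Function.Exact (lTensor (↥(ker π)) f) (lTensor (↥(ker π)) g) :=
    lTensor_exact (↥(ker π)) hfg hg
  obtain ⟨w, hw⟩ := (hex2 _).mp hv0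
  have h3 : lTensor G f (rTensor A ι w) = lTensor G f u := by
    rw [← LinearMap.comp_apply, lTensor_comp_rTensor, ← rTensor_comp_lTensor,
      LinearMap.comp_apply, hw, hv]
  have h4 : rTensor A ι w = u :=
    Module.Flat.lTensor_preserves_injective_linearMap f hf h3
  rw [← h4, ← LinearMap.comp_apply, ← rTensor_comp, hπι, rTensor_zero, LinearMap.zero_apply]

/-- If `A → P → B → 0` is exact with `A → P` injective and `B` flat, then
`X ⊗ A → X ⊗ P` is injective, for every module `X`. -/
lemma flatQuot_lTensor_injective {R : Type u} [CommRing R]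
    (X : Type u) [AddCommGroup X] [Module R X]
    {A P B : Type u} [AddCommGroup A] [Module R A] [AddCommGroup P] [Module R P]
    [AddCommGroup B] [Module R B] [Module.Flat R B]
    (f : A →ₗ[R] P) (g : P →ₗ[R] B)
    (hf : Function.Injective f) (hfg : Function.Exact f g) (hg : Function.Surjective g) :
    Function.Injective (lTensor X f) :=
  flatQuot_aux X (X →₀ R) (Finsupp.linearCombination R id)
    (fun x => ⟨Finsupp.single x 1, by simp⟩) f g hf hfg hg

/-- Schanuel-style lemma: `Tor1Zero R X C` follows from the injectivity statement for a
single flat presentation of `C`. -/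
lemma tor1Zero_of_presentation {R : Type u} [CommRing R] {X C : Type u}
    [AddCommGroup X] [Module R X] [AddCommGroup C] [Module R C]
    (B : Type u) [AddCommGroup B] [Module R B] [Module.Flat R B]
    (p : B →ₗ[R] C) (hp : Function.Surjective p)
    (hinj : Function.Injective (lTensor X (ker p).subtype)) :
    Tor1Zero R X C := by
  intro E _ _ _ K q hq hK
  subst hK
  set P : Submodule R (E × B) :=
    ker ((q.comp (fst R E B)) - (p.comp (snd R E B))) with hPdef
  have memP : ∀ x : E × B, x ∈ P ↔ q x.1 = p x.2 := by
    intro x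
    simp [hPdef, LinearMap.mem_ker, sub_eq_zero]
  set π₁ : ↥P →ₗ[R] E := (fst R E B).comp P.subtype with hπ₁def
  set π₂ : ↥P →ₗ[R] B := (snd R E B).comp P.subtype with hπ₂def
  have hπ₁ : Function.Surjective π₁ := by
    intro e
    obtain ⟨b, hb⟩ := hp (q e)
    exact ⟨⟨(e, b), (memP _).mpr hb.symm⟩, rfl⟩
  have hπ₂ : Function.Surjective π₂ := by
    intro b
    obtain ⟨e, he⟩ := hq (p b)
    exact ⟨⟨(e, b), (memP _).mpr he⟩, rfl⟩
  set j : ↥(ker p) →ₗ[R] ↥P :=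
    codRestrict P ((inr R E B).comp (ker p).subtype)
      (fun c => (memP _).mpr (by simp [LinearMap.mem_ker.mp c.2])) with hjdef
  set j' : ↥(ker q) →ₗ[R] ↥P :=
    codRestrict P ((inl R E B).comp (ker q).subtype)
      (fun c => (memP _).mpr (by simp [LinearMap.mem_ker.mp c.2])) with hj'def
  have hcomp1 : π₁.comp j' = (ker q).subtype := by ext k; rfl
  have hcomp2 : π₂.comp j = (ker p).subtype := by ext k; rfl
  have hcomp0 : π₂.comp j' = 0 := by ext k; rfl
  have hj'i : Function.Injective j' := by
    intro a b hab
    exact Subtype.ext (congrArg (fun z : ↥P => z.1.1) hab)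
  have exact1 : Function.Exact j π₁ := by
    intro y
    constructor
    · intro hy
      have hy1 : (y : E × B).1 = 0 := hy
      have hb : p (y : E × B).2 = 0 := by
        have hm := (memP (y : E × B)).mp y.2
        rw [hy1, map_zero] at hm
        exact hm.symm
      refine ⟨⟨(y : E × B).2, LinearMap.mem_ker.mpr hb⟩, ?_⟩
      apply Subtype.ext
      show ((0 : E), (y : E × B).2) = (y : E × B)
      rw [Prod.ext_iff]
      exact ⟨hy1.symm, rfl⟩
    · rintro ⟨z, rfl⟩
      rfl
  have exact2 : Function.Exact j' π₂ := by
    intro y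
    constructor
    · intro hy
      have hy2 : (y : E × B).2 = 0 := hy
      have hb : q (y : E × B).1 = 0 := by
        have hm := (memP (y : E × B)).mp y.2
        rw [hy2, map_zero] at hm
        exact hm
      refine ⟨⟨(y : E × B).1, LinearMap.mem_ker.mpr hb⟩, ?_⟩
      apply Subtype.ext
      show ((y : E × B).1, (0 : B)) = (y : E × B)
      rw [Prod.ext_iff]
      exact ⟨rfl, hy2.symm⟩
    · rintro ⟨z, rfl⟩
      rfl
  rw [injective_iff_map_eq_zero]
  intro t ht
  have h1 : lTensor X π₁ (lTensor X j' t) = 0 := by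
    rw [← LinearMap.comp_apply, ← lTensor_comp, hcomp1]
    exact ht
  have hex1 : Function.Exact (lTensor X j) (lTensor X π₁) := lTensor_exact X exact1 hπ₁
  obtain ⟨s, hs⟩ := (hex1 _).mp h1
  have h2 : lTensor X (ker p).subtype s = 0 := by
    rw [← hcomp2, lTensor_comp, LinearMap.comp_apply, hs, ← LinearMap.comp_apply,
      ← lTensor_comp, hcomp0, lTensor_zero, LinearMap.zero_apply]
  have hs0 : s = 0 := hinj (by rw [map_zero]; exact h2)
  have hjt : lTensor X j' t = 0 := by rw [← hs, hs0, map_zero]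
  have hj't : Function.Injective (lTensor X j') :=
    flatQuot_lTensor_injective X j' π₂ hj'i exact2 hπ₂
  exact hj't (by rw [map_zero]; exact hjt)

/-- Let `F•` be an acyclic complex of flat `R`-modules with cycles `C n = ker (F n → F (n+1))`,
and `X` a module.  Then `X ⊗ F•` is acyclic iff `Tor₁(X, C n) = 0` for all `n`. -/
theorem tensor_acyclic_iff_tor_vanishes {R : Type u} [CommRing R]
    (F : ℤ → Type u) [∀ n, AddCommGroup (F n)] [∀ n, Module R (F n)]
    [∀ n, Module.Flat R (F n)]
    (d : ∀ n, F n →ₗ[R] F (n + 1))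
    (hd2 : ∀ n, (d (n + 1)).comp (d n) = 0)
    (hac : IsAcyclicComplex F d)
    (X : Type u) [AddCommGroup X] [Module R X] :
    IsAcyclicComplex (fun n => TensorProduct R X (F n))
        (fun n => LinearMap.lTensor X (d n)) ↔
      ∀ n : ℤ, Tor1Zero R X ↥(LinearMap.ker (d n)) := by
  have hmem : ∀ (m : ℤ) (x : F m), d m x ∈ ker (d (m + 1)) := by
    intro m x
    rw [← hac m]
    exact ⟨x, rfl⟩
  set p : ∀ m : ℤ, F m →ₗ[R] ↥(ker (d (m + 1))) :=
    fun m => (d m).codRestrict (ker (d (m + 1))) (hmem m) with hpdef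
  have hpsurj : ∀ m, Function.Surjective (p m) := by
    intro m y
    have hy : y.1 ∈ range (d m) := by rw [hac m]; exact y.2
    obtain ⟨x, hx⟩ := hy
    exact ⟨x, Subtype.ext hx⟩
  have hpker : ∀ m, ker (p m) = ker (d m) := fun m => ker_codRestrict _ _ _
  have hpcomp : ∀ m, (ker (d (m + 1))).subtype.comp (p m) = d m :=
    fun m => LinearMap.subtype_comp_codRestrict _ _ _
  constructor
  · intro hT
    have key : ∀ j : ℤ, Function.Injective (lTensor X (ker (d (j + 1 + 1))).subtype) := by
      intro j
      rw [injective_iff_map_eq_zero]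
      intro t ht
      obtain ⟨b, rfl⟩ := lTensor_surjective X (hpsurj (j + 1)) t
      have hb : lTensor X (d (j + 1)) b = 0 := by
        rw [← hpcomp (j + 1), lTensor_comp, LinearMap.comp_apply]
        exact ht
      have hbr : b ∈ range (lTensor X (d j)) := by
        rw [hT j]
        exact hb
      obtain ⟨c, rfl⟩ := hbr
      have hpd : (p (j + 1)).comp (d j) = 0 := by
        ext x
        exact DFunLike.congr_fun (hd2 j) x
      rw [← LinearMap.comp_apply, ← lTensor_comp, hpd, lTensor_zero, LinearMap.zero_apply]
    intro n
    obtain ⟨j, rfl⟩ : ∃ j : ℤ, n = j + 1 + 1 + 1 := ⟨n - 3, by omega⟩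
    apply tor1Zero_of_presentation (F (j + 1 + 1)) (p (j + 1 + 1)) (hpsurj _)
    rw [hpker]
    exact key j
  · intro h n
    have hinj : ∀ m : ℤ, Function.Injective (lTensor X ((ker (d (m + 1))).subtype)) := by
      intro m
      exact h (m + 1 + 1) (F (m + 1)) (ker (d (m + 1))) (p (m + 1)) (hpsurj (m + 1))
        (hpker (m + 1))
    show range (lTensor X (d n)) = ker (lTensor X (d (n + 1)))
    have e1 : range (lTensor X (d n)) = range (lTensor X ((ker (d (n + 1))).subtype)) := by
      rw [← hpcomp n, lTensor_comp]
      exact range_comp_of_range_eq_top _ (range_eq_top.mpr (lTensor_surjective X (hpsurj n)))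
    have e2 : ker (lTensor X (d (n + 1))) = ker (lTensor X (p (n + 1))) := by
      rw [← hpcomp (n + 1), lTensor_comp]
      exact ker_comp_of_ker_eq_bot _ (ker_eq_bot.mpr (hinj (n + 1)))
    have e3 : ker (lTensor X (p (n + 1))) = range (lTensor X ((ker (p (n + 1))).subtype)) :=
      (lTensor_exact X (exact_subtype_ker_map (p (n + 1))) (hpsurj (n + 1))).linearMap_ker_eq
    rw [e1, e2, e3, hpker]
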